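/- Let G be a graph on vertex set {v₁,...,vₙ} with a Hamiltonian cycle C and minimum degree at least 3, with m edges. Let G' be obtained from G by replacing each edge uv ∉ E(C) with a path u–w–v through a new vertex w of degree 2 while also keeping the edge uv (i.e., G' = T(G - E(C)) + E(C), the triangulation of G - E(C) plus the cycle edges). Define f on E(G') by f(e) = 1 if e ∈ E(G) and f(e) = -1 otherwise. Then f is a signed edge domination function of G' with total weight f(G') = 2n - m = 2|V(G')| - |E(G')|. -/
import Mathlib


open Finset

open scoped Classical

/-- The weight of a vertex `v`: the sum of `f` over the edges of `G` incident to `v`. -/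
noncomputable def vweight {V : Type*} [Fintype V] [DecidableEq V]
    (G : SimpleGraph V) (f : Sym2 V → ℤ) (v : V) : ℤ :=
  ∑ e ∈ G.incidenceFinset v, f e

/-- `f` is a signed edge domination function of `G`: it takes values in `{1,-1}` on the
edges and for each edge `e = uv`, `∑_{e' ∈ N[e]} f e' = f(u) + f(v) - f(e) ≥ 1`. -/
noncomputable def IsSEDF {V : Type*} [Fintype V] [DecidableEq V]
    (G : SimpleGraph V) (f : Sym2 V → ℤ) : Prop :=
  (∀ e ∈ G.edgeFinset, f e = 1 ∨ f e = -1) ∧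
  ∀ ⦃u v⦄, G.Adj u v → 1 ≤ vweight G f u + vweight G f v - f s(u, v)

/-- `f ∈ SEDF⁰(G)`: `f` takes values in `{1,-1}` on the edges, every vertex has
nonnegative weight, and both endpoints of any positive edge have weights summing to ≥ 2. -/
noncomputable def IsSEDF0 {V : Type*} [Fintype V] [DecidableEq V]
    (G : SimpleGraph V) (f : Sym2 V → ℤ) : Prop :=
  (∀ e ∈ G.edgeFinset, f e = 1 ∨ f e = -1) ∧
  (∀ v, 0 ≤ vweight G f v) ∧
  ∀ ⦃u v⦄, G.Adj u v → f s(u, v) = 1 → 2 ≤ vweight G f u + vweight G f v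

lemma s14_card_filter_mem {α : Type*} [Fintype α] [DecidableEq α]
    (e : Sym2 α) (he : ¬ e.IsDiag) : (Finset.univ.filter (· ∈ e)).card = 2 := by
  induction e using Sym2.ind with
  | _ a b =>
    rw [Sym2.isDiag_iff_proj_eq] at he
    have h : Finset.univ.filter (· ∈ s(a, b)) = {a, b} := by
      ext v; simp [Sym2.mem_iff]
    rw [h, card_insert_of_notMem (by simp [he]), card_singleton]

lemma s14_incidenceFinset_eq_image {V : Type*} [Fintype V] [DecidableEq V]
    (G : SimpleGraph V) (v : V) :
    G.incidenceFinset v = (G.neighborFinset v).image (fun w => s(v, w)) := by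
  ext e
  simp only [SimpleGraph.mem_incidenceFinset, Finset.mem_image,
    SimpleGraph.mem_neighborFinset, SimpleGraph.incidenceSet, Set.mem_setOf_eq]
  constructor
  · rintro ⟨he, hv⟩
    refine ⟨Sym2.Mem.other hv, ?_, Sym2.other_spec hv⟩
    rw [← SimpleGraph.mem_edgeSet]
    rwa [Sym2.other_spec hv]
  · rintro ⟨w, hw, rfl⟩
    exact ⟨(G.mem_edgeSet).mpr hw, Sym2.mem_mk_left v w⟩

lemma s14_vweight' {V : Type*} [Fintype V] [DecidableEq V]
    (G : SimpleGraph V) (f : Sym2 V → ℤ) (v : V) :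
    vweight G f v = ∑ w ∈ G.neighborFinset v, f s(v, w) := by
  rw [vweight, s14_incidenceFinset_eq_image, Finset.sum_image]
  intro a _ b _ h
  exact Sym2.congr_right.mp h

lemma s14_handshake {V : Type*} [Fintype V] [DecidableEq V]
    (G : SimpleGraph V) (f : Sym2 V → ℤ) :
    ∑ v, vweight G f v = 2 * ∑ e ∈ G.edgeFinset, f e := by
  simp_rw [vweight, SimpleGraph.incidenceFinset_eq_filter, Finset.sum_filter]
  rw [Finset.sum_comm, Finset.mul_sum]
  refine Finset.sum_congr rfl fun e he => ?_
  rw [← Finset.sum_filter, Finset.sum_const,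
    s14_card_filter_mem e (SimpleGraph.not_isDiag_of_mem_edgeSet G (SimpleGraph.mem_edgeFinset.mp he))]
  simp [two_mul]

/-- let `C` be a Hamiltonian cycle of `G` (a spanning connected
2-regular subgraph), `δ(G) ≥ 3`, and let `G'` be obtained from `G` by adding, for each
edge `e = uv ∉ E(C)`, a new vertex `w_e` adjacent to `u` and `v` (the triangulation
`T(G - E(C)) + E(C)`, keeping all edges of `G`). Assigning `+1` to the edges of `G`
and `-1` to the new edges gives an SEDF of `G'` of total weight
`2n - m = 2|V(G')| - |E(G')|`. -/
theorem stmt14 {V : Type*} [Fintype V] [DecidableEq V]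
    (G C : SimpleGraph V) (hCG : C ≤ G)
    (hC2 : ∀ v, C.degree v = 2) (hCconn : C.Connected)
    (hδ : ∀ v, 3 ≤ G.degree v)
    (E' : Type*) [Fintype E'] [DecidableEq E'] (ι : E' → Sym2 V)
    (hinj : Function.Injective ι)
    (hmem : ∀ x, ι x ∈ G.edgeSet ∧ ι x ∉ C.edgeSet)
    (hsurj : ∀ e, e ∈ G.edgeSet → e ∉ C.edgeSet → ∃ x, ι x = e)
    (G' : SimpleGraph (V ⊕ E'))
    (hG'1 : ∀ u v : V, G'.Adj (Sum.inl u) (Sum.inl v) ↔ G.Adj u v)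
    (hG'2 : ∀ (u : V) (x : E'), G'.Adj (Sum.inl u) (Sum.inr x) ↔ u ∈ ι x)
    (hG'3 : ∀ x y : E', ¬ G'.Adj (Sum.inr x) (Sum.inr y))
    (f : Sym2 (V ⊕ E') → ℤ)
    (hf1 : ∀ u v : V, G.Adj u v → f s(Sum.inl u, Sum.inl v) = 1)
    (hf2 : ∀ (u : V) (x : E'), u ∈ ι x → f s(Sum.inl u, Sum.inr x) = -1) :
    IsSEDF G' f ∧
      ∑ e ∈ G'.edgeFinset, f e
        = 2 * (Fintype.card V : ℤ) - G.edgeFinset.card ∧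
      ∑ e ∈ G'.edgeFinset, f e
        = 2 * (Fintype.card (V ⊕ E') : ℤ) - G'.edgeFinset.card := by
  classical
  -- C has exactly |V| edges
  have hCn : C.edgeFinset.card = Fintype.card V := by
    have h := C.sum_degrees_eq_twice_card_edges
    simp only [hC2, Finset.sum_const, Finset.card_univ, smul_eq_mul] at h
    omega
  have hCsub : C.edgeFinset ⊆ G.edgeFinset := SimpleGraph.edgeFinset_mono hCG
  have hnm : Fintype.card V ≤ G.edgeFinset.card := by
    have := Finset.card_le_card hCsub
    omega
  -- |E'| + n = m
  have hE'card : Fintype.card E' + Fintype.card V = G.edgeFinset.card := by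
    have himg : Finset.univ.image ι = G.edgeFinset \ C.edgeFinset := by
      ext e
      simp only [Finset.mem_image, Finset.mem_univ, true_and, Finset.mem_sdiff,
        SimpleGraph.mem_edgeFinset]
      constructor
      · rintro ⟨x, rfl⟩; exact ⟨(hmem x).1, (hmem x).2⟩
      · rintro ⟨h1, h2⟩; exact hsurj e h1 h2
    have hcard := congrArg Finset.card himg
    rw [Finset.card_image_of_injective _ hinj, Finset.card_univ,
      Finset.card_sdiff_of_subset hCsub, hCn] at hcard
    omega
  -- a v + 2 = deg v
  have ha : ∀ v : V, (Finset.univ.filter (fun x : E' => v ∈ ι x)).card + 2 = G.degree v := by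
    intro v
    have himg : (Finset.univ.filter (fun x : E' => v ∈ ι x)).image ι
        = G.incidenceFinset v \ C.incidenceFinset v := by
      ext e
      simp only [Finset.mem_image, Finset.mem_filter, Finset.mem_univ, true_and,
        Finset.mem_sdiff, SimpleGraph.mem_incidenceFinset, SimpleGraph.incidenceSet,
        Set.mem_setOf_eq]
      constructor
      · rintro ⟨x, hx, rfl⟩
        exact ⟨⟨(hmem x).1, hx⟩, fun h => (hmem x).2 h.1⟩
      · rintro ⟨⟨he, hv⟩, hne⟩
        obtain ⟨x, rfl⟩ := hsurj e he (fun hc => hne ⟨hc, hv⟩)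
        exact ⟨x, hv, rfl⟩
    have hsub : C.incidenceFinset v ⊆ G.incidenceFinset v := by
      intro e he
      simp only [SimpleGraph.mem_incidenceFinset, SimpleGraph.incidenceSet,
        Set.mem_setOf_eq] at he ⊢
      exact ⟨SimpleGraph.edgeSet_mono hCG he.1, he.2⟩
    have h2 := congrArg Finset.card himg
    rw [Finset.card_image_of_injective _ hinj, Finset.card_sdiff_of_subset hsub,
      SimpleGraph.card_incidenceFinset_eq_degree, SimpleGraph.card_incidenceFinset_eq_degree,
      hC2] at h2
    have := hδ v
    omega
  -- splitting the weight of a vertex of G'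
  have hsplit : ∀ (g : Sym2 (V ⊕ E') → ℤ) (w : V ⊕ E'),
      vweight G' g w = (∑ u : V, if G'.Adj w (Sum.inl u) then g s(w, Sum.inl u) else 0)
        + ∑ x : E', if G'.Adj w (Sum.inr x) then g s(w, Sum.inr x) else 0 := by
    intro g w
    rw [s14_vweight', SimpleGraph.neighborFinset_eq_filter, Finset.sum_filter,
      Fintype.sum_sum_type]
  have hwf_inl : ∀ v : V, vweight G' f (Sum.inl v) = 2 := by
    intro v
    rw [hsplit]
    have h1 : (∑ u : V, if G'.Adj (Sum.inl v) (Sum.inl u) then f s(Sum.inl v, Sum.inl u) else 0)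
        = (G.degree v : ℤ) := by
      have heach : ∀ u : V,
          (if G'.Adj (Sum.inl v) (Sum.inl u) then f s(Sum.inl v, Sum.inl u) else 0)
          = if G.Adj v u then (1 : ℤ) else 0 := by
        intro u
        rw [hG'1]
        split_ifs with h
        · exact hf1 v u h
        · rfl
      simp_rw [heach]
      rw [Finset.sum_boole, ← SimpleGraph.neighborFinset_eq_filter,
        SimpleGraph.card_neighborFinset_eq_degree]
    have h2 : (∑ x : E', if G'.Adj (Sum.inl v) (Sum.inr x) then f s(Sum.inl v, Sum.inr x) else 0)
        = -(((Finset.univ.filter (fun x : E' => v ∈ ι x)).card : ℤ)) := by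
      have heach : ∀ x : E',
          (if G'.Adj (Sum.inl v) (Sum.inr x) then f s(Sum.inl v, Sum.inr x) else 0)
          = -(if v ∈ ι x then (1 : ℤ) else 0) := by
        intro x
        rw [hG'2]
        split_ifs with h
        · rw [hf2 v x h]
        · simp
      simp_rw [heach]
      rw [Finset.sum_neg_distrib, Finset.sum_boole]
    rw [h1, h2]
    have hav := ha v
    omega
  have hwf_inr : ∀ x : E', vweight G' f (Sum.inr x) = -2 := by
    intro x
    rw [hsplit]
    have h2 : (∑ y : E', if G'.Adj (Sum.inr x) (Sum.inr y) then f s(Sum.inr x, Sum.inr y) else 0)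
        = 0 := by
      apply Finset.sum_eq_zero; intro y _; rw [if_neg (hG'3 x y)]
    have h1 : (∑ u : V, if G'.Adj (Sum.inr x) (Sum.inl u) then f s(Sum.inr x, Sum.inl u) else 0)
        = -2 := by
      have heach : ∀ u : V,
          (if G'.Adj (Sum.inr x) (Sum.inl u) then f s(Sum.inr x, Sum.inl u) else 0)
          = -(if u ∈ ι x then (1 : ℤ) else 0) := by
        intro u
        rw [G'.adj_comm, hG'2]
        split_ifs with h
        · rw [Sym2.eq_swap, hf2 u x h]
        · simp
      simp_rw [heach]
      rw [Finset.sum_neg_distrib, Finset.sum_boole,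
        s14_card_filter_mem (ι x) (G.not_isDiag_of_mem_edgeSet (hmem x).1)]
      norm_num
    rw [h1, h2]; norm_num
  -- weights for the constant function 1 (to count edges of G')
  have hw1_inl : ∀ v : V, vweight G' (fun _ => (1 : ℤ)) (Sum.inl v)
      = (G.degree v : ℤ) + ((Finset.univ.filter (fun x : E' => v ∈ ι x)).card : ℤ) := by
    intro v
    rw [hsplit]
    congr 1
    · simp only [hG'1]
      rw [Finset.sum_boole, ← SimpleGraph.neighborFinset_eq_filter,
        SimpleGraph.card_neighborFinset_eq_degree]
    · simp only [hG'2]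
      rw [Finset.sum_boole]
  have hw1_inr : ∀ x : E', vweight G' (fun _ => (1 : ℤ)) (Sum.inr x) = 2 := by
    intro x
    rw [hsplit]
    have hadj : ∀ u : V, G'.Adj (Sum.inr x) (Sum.inl u) ↔ u ∈ ι x := by
      intro u; rw [G'.adj_comm]; exact hG'2 u x
    have h2 : (∑ y : E', if G'.Adj (Sum.inr x) (Sum.inr y) then (1 : ℤ) else 0) = 0 := by
      apply Finset.sum_eq_zero; intro y _; rw [if_neg (hG'3 x y)]
    have h1 : (∑ u : V, if G'.Adj (Sum.inr x) (Sum.inl u) then (1 : ℤ) else 0) = 2 := by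
      simp only [hadj]
      rw [Finset.sum_boole, s14_card_filter_mem (ι x) (G.not_isDiag_of_mem_edgeSet (hmem x).1)]
      norm_num
    rw [h1, h2]; norm_num
  -- the SEDF property
  have hfval : ∀ e ∈ G'.edgeFinset, f e = 1 ∨ f e = -1 := by
    intro e he
    rw [SimpleGraph.mem_edgeFinset] at he
    induction e using Sym2.ind with
    | _ a b =>
      rw [SimpleGraph.mem_edgeSet] at he
      rcases a with u | x <;> rcases b with v | y
      · exact Or.inl (hf1 u v ((hG'1 u v).mp he))
      · exact Or.inr (hf2 u y ((hG'2 u y).mp he))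
      · rw [Sym2.eq_swap]
        exact Or.inr (hf2 v x ((hG'2 v x).mp ((G'.adj_comm _ _).mp he)))
      · exact absurd he (hG'3 x y)
  have hsedf : IsSEDF G' f := by
    refine ⟨hfval, ?_⟩
    intro a b hadj
    rcases a with u | x <;> rcases b with v | y
    · rw [hwf_inl, hwf_inl, hf1 u v ((hG'1 u v).mp hadj)]; norm_num
    · rw [hwf_inl, hwf_inr, hf2 u y ((hG'2 u y).mp hadj)]; norm_num
    · rw [hwf_inr, hwf_inl, Sym2.eq_swap,
        hf2 v x ((hG'2 v x).mp ((G'.adj_comm _ _).mp hadj))]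
      norm_num
    · exact absurd hadj (hG'3 x y)
  -- total weight computations
  have hS := s14_handshake G' f
  rw [Fintype.sum_sum_type] at hS
  simp only [hwf_inl, hwf_inr, Finset.sum_const, Finset.card_univ, smul_eq_mul,
    nsmul_eq_mul] at hS
  have hE'cast : (Fintype.card E' : ℤ) + (Fintype.card V : ℤ) = (G.edgeFinset.card : ℤ) := by
    exact_mod_cast hE'card
  have hgoal1 : ∑ e ∈ G'.edgeFinset, f e
      = 2 * (Fintype.card V : ℤ) - G.edgeFinset.card := by
    linarith
  refine ⟨hsedf, hgoal1, ?_⟩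
  -- count edges of G'
  have hT := s14_handshake G' (fun _ => (1 : ℤ))
  rw [Fintype.sum_sum_type] at hT
  simp only [hw1_inl, hw1_inr, Finset.sum_const, Finset.card_univ, smul_eq_mul,
    nsmul_eq_mul, mul_one] at hT
  rw [Finset.sum_add_distrib] at hT
  have hsumdeg : (∑ v : V, (G.degree v : ℤ)) = 2 * (G.edgeFinset.card : ℤ) := by
    exact_mod_cast congrArg (Nat.cast : ℕ → ℤ) G.sum_degrees_eq_twice_card_edges
  have hsuma : (∑ v : V, ((Finset.univ.filter (fun x : E' => v ∈ ι x)).card : ℤ))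
      + 2 * (Fintype.card V : ℤ) = 2 * (G.edgeFinset.card : ℤ) := by
    have h := Finset.sum_congr rfl (fun v (_ : v ∈ Finset.univ) => ha v)
    rw [Finset.sum_add_distrib, Finset.sum_const, Finset.card_univ, smul_eq_mul,
      G.sum_degrees_eq_twice_card_edges] at h
    have h' := congrArg (Nat.cast : ℕ → ℤ) h
    push_cast at h'
    linarith
  have hcardsum : (Fintype.card (V ⊕ E') : ℤ)
      = (Fintype.card V : ℤ) + (Fintype.card E' : ℤ) := by
    rw [Fintype.card_sum]; push_cast; ring
  rw [hgoal1, hcardsum]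
  linarith
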